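/- Let a < b be integers. There are exactly two strict linear orders ≺ on the digital interval [a,b]_ℤ = {r ∈ ℤ : a ≤ r ≤ b} with the property that for every r ∈ [a,b]_ℤ both rays {p ∈ [a,b]_ℤ : p ≺ r} and {p ∈ [a,b]_ℤ : r ≺ p} are digitally 2-connected (where the empty set and singletons count as digitally connected); namely, the usual order < and its reverse >. -/

import Mathlib

/-- `κ_l`-adjacency on `ℤⁿ`: two distinct points are `κ_l`-adjacent if they differ
by at most `1` in every coordinate and differ in at most `l` coordinates. -/
def adjK (l n : ℕ) (x y : Fin n → ℤ) : Prop :=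
  x ≠ y ∧ (∀ k, |x k - y k| ≤ 1) ∧
    (Finset.univ.filter fun k => x k ≠ y k).card ≤ l

/-- the 2-adjacency on `ℤ` -/
def adj2 (x y : ℤ) : Prop := |x - y| = 1

/-- the 4-adjacency on `ℤ²` -/
def adj4 (x y : ℤ × ℤ) : Prop := |x.1 - y.1| + |x.2 - y.2| = 1

/-- the 8-adjacency on `ℤ²` -/
def adj8 (x y : ℤ × ℤ) : Prop := x ≠ y ∧ |x.1 - y.1| ≤ 1 ∧ |x.2 - y.2| ≤ 1

/-- the 6-adjacency on `ℤ³` -/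
def adj6 (x y : ℤ × ℤ × ℤ) : Prop :=
  |x.1 - y.1| + |x.2.1 - y.2.1| + |x.2.2 - y.2.2| = 1

/-- the digital neighborhood of `m` taken within `M`: the points of `M` that are
`r`-adjacent to `m` -/
def Nbhd {X : Type*} (r : X → X → Prop) (M : Set X) (m : X) : Set X :=
  {p ∈ M | r m p}

/-- a digital isomorphism between the digital images `(A, rX)` and `(B, rY)`:
a bijection preserving and reflecting adjacency -/
def DigIso {X Y : Type*} (rX : X → X → Prop) (A : Set X)
    (rY : Y → Y → Prop) (B : Set Y) : Prop :=
  ∃ α : A ≃ B, ∀ x y : A, rX x.1 y.1 ↔ rY (α x).1 (α y).1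

/-- `D₊ⁿ`, the points of `ℤⁿ` with all coordinates nonnegative -/
def Dplus (n : ℕ) : Set (Fin n → ℤ) := {x | ∀ k, 0 ≤ x k}

/-- `m` has a chart into `(ℤⁿ, κ₁)`: its digital neighborhood within `M` is digitally
isomorphic to the digital neighborhood of some point `s` taken in `(ℤⁿ, κ₁)` -/
def ChartZ {X : Type*} (r : X → X → Prop) (M : Set X) (m : X) (n : ℕ) : Prop :=
  ∃ s : Fin n → ℤ, DigIso r (Nbhd r M m) (adjK 1 n) (Nbhd (adjK 1 n) Set.univ s)

/-- `m` has a chart into `(D₊ⁿ, κ₁)` -/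
def ChartD {X : Type*} (r : X → X → Prop) (M : Set X) (m : X) (n : ℕ) : Prop :=
  ∃ s ∈ Dplus n, DigIso r (Nbhd r M m) (adjK 1 n) (Nbhd (adjK 1 n) (Dplus n) s)

/-- `(M, r)` is a digital `n`-manifold (without boundary): `n` is the least
nonnegative integer such that every point has a chart into `(ℤⁿ, κ₁)` -/
def IsDigManifold {X : Type*} (r : X → X → Prop) (M : Set X) (n : ℕ) : Prop :=
  (∀ m ∈ M, ChartZ r M m n) ∧ ∀ k < n, ¬ ∀ m ∈ M, ChartZ r M m k

/-- `(M, r)` is a digital `n`-manifold with boundary: `n` is the least nonnegative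
integer such that every point has a chart into `(ℤⁿ, κ₁)` or into `(D₊ⁿ, κ₁)` -/
def IsDigManifoldBd {X : Type*} (r : X → X → Prop) (M : Set X) (n : ℕ) : Prop :=
  (∀ m ∈ M, ChartZ r M m n ∨ ChartD r M m n) ∧
    ∀ k < n, ¬ ∀ m ∈ M, ChartZ r M m k ∨ ChartD r M m k

/-- the interior of a digital `n`-manifold with boundary: the points admitting a
chart into `(ℤⁿ, κ₁)` -/
def dInterior {X : Type*} (r : X → X → Prop) (M : Set X) (n : ℕ) : Set X :=
  {m ∈ M | ChartZ r M m n}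

/-- the boundary of a digital `n`-manifold with boundary: the points of `M` not
admitting a chart into `(ℤⁿ, κ₁)` -/
def dBoundary {X : Type*} (r : X → X → Prop) (M : Set X) (n : ℕ) : Set X :=
  {m ∈ M | ¬ ChartZ r M m n}

/-- `S` is digitally connected w.r.t. adjacency `r`: any two points are joined by a
chain of points of `S` in which consecutive points are adjacent -/
def ConnOn {X : Type*} (r : X → X → Prop) (S : Set X) : Prop :=
  ∀ x ∈ S, ∀ y ∈ S,
    Relation.ReflTransGen (fun p q => p ∈ S ∧ q ∈ S ∧ r p q) x y

/-- the digital support of an integer-valued function -/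
def sp {A : Type*} (f : A → ℤ) : Set A := {p | f p ≠ 0}

open Classical in
/-- the digital Euler characteristic of a finite digital image: the alternating sum
`Σ (-1)^r α_r` where `α_r` is the number of `r`-dimensional simplices, i.e.
`(r+1)`-element subsets of `M` whose points are pairwise adjacent -/
noncomputable def eulerChar {X : Type*} (r : X → X → Prop) (M : Finset X) : ℤ :=
  ∑ k ∈ Finset.range M.card, (-1 : ℤ) ^ k *
    (((M.powersetCard (k + 1)).filter fun S => ∀ x ∈ S, ∀ y ∈ S, x ≠ y → r x y).card : ℤ)

/-- a strict linear order on the digital interval `[a,b]_ℤ` all of whose rays are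
digitally 2-connected -/
def GoodOrder (a b : ℤ) (r : ℤ → ℤ → Prop) : Prop :=
  (∀ p ∈ Set.Icc a b, ¬ r p p) ∧
  (∀ p ∈ Set.Icc a b, ∀ q ∈ Set.Icc a b, ∀ t ∈ Set.Icc a b, r p q → r q t → r p t) ∧
  (∀ p ∈ Set.Icc a b, ∀ q ∈ Set.Icc a b, p ≠ q → (r p q ∨ r q p)) ∧
  (∀ c ∈ Set.Icc a b,
    ConnOn adj2 {p ∈ Set.Icc a b | r p c} ∧ ConnOn adj2 {p ∈ Set.Icc a b | r c p})

lemma adj2_symm' {p q : ℤ} (h : adj2 p q) : adj2 q p := by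
  unfold adj2 at *; rw [abs_sub_comm]; exact h

lemma conn_of_convex (S : Set ℤ)
    (h : ∀ x ∈ S, ∀ y ∈ S, ∀ t, x ≤ t → t ≤ y → t ∈ S) : ConnOn adj2 S := by
  have chain : ∀ x ∈ S, ∀ y, x ≤ y → y ∈ S →
      Relation.ReflTransGen (fun p q => p ∈ S ∧ q ∈ S ∧ adj2 p q) x y := by
    intro x hx y hxy
    refine Int.le_induction (motive := fun y _ => y ∈ S →
        Relation.ReflTransGen (fun p q => p ∈ S ∧ q ∈ S ∧ adj2 p q) x y) ?_ ?_ y hxy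
    · intro _; exact Relation.ReflTransGen.refl
    · intro n hn IH hmem
      have hnS : n ∈ S := h x hx (n + 1) hmem n hn (by omega)
      refine Relation.ReflTransGen.tail (IH hnS) ⟨hnS, hmem, ?_⟩
      show |n - (n + 1)| = 1; simp
  intro x hx y hy
  rcases le_total x y with hxy | hyx
  · exact chain x hx y hxy hy
  · have hsym : Symmetric (fun p q => p ∈ S ∧ q ∈ S ∧ adj2 p q) := by
      rintro p q ⟨h1, h2, h3⟩; exact ⟨h2, h1, adj2_symm' h3⟩
    exact (@Relation.ReflTransGen.symmetric _ _ ⟨hsym⟩).1 _ _ (chain y hy x hyx hx)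

lemma convex_of_conn (S : Set ℤ) (h : ConnOn adj2 S) :
    ∀ x ∈ S, ∀ y ∈ S, ∀ t, x ≤ t → t ≤ y → t ∈ S := by
  intro x hx y hy t hxt hty
  have key : ∀ z, Relation.ReflTransGen (fun p q => p ∈ S ∧ q ∈ S ∧ adj2 p q) x z →
      ∀ t, x ≤ t → t ≤ z → t ∈ S := by
    intro z hz
    induction hz with
    | refl => intro t h1 h2; have : t = x := le_antisymm h2 h1; rwa [this]
    | tail hxq hstep IH =>
      rename_i q w
      obtain ⟨hqS, hwS, hadj⟩ := hstep
      intro t h1 h2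
      rcases le_or_gt t q with h3 | h3
      · exact IH t h1 h3
      · have habs : |q - w| = 1 := hadj
        have habs' : q - w = 1 ∨ q - w = -1 := (abs_eq (by norm_num)).mp habs
        have : t = w := by omega
        rwa [this]
  exact key y (h x hx y hy) t hxt hty

lemma goodorder_lt (a b : ℤ) : GoodOrder a b (· < ·) := by
  refine ⟨fun p _ => lt_irrefl p, fun p _ q _ t _ h1 h2 => h1.trans h2,
    fun p _ q _ hne => lt_or_gt_of_ne hne, fun c hc => ⟨?_, ?_⟩⟩
  · apply conn_of_convex
    rintro x ⟨hx, hx2⟩ y ⟨hy, hy2⟩ t h1 h2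
    refine ⟨⟨?_, ?_⟩, ?_⟩ <;> simp only [Set.mem_Icc] at hx hy <;> omega
  · apply conn_of_convex
    rintro x ⟨hx, hx2⟩ y ⟨hy, hy2⟩ t h1 h2
    refine ⟨⟨?_, ?_⟩, ?_⟩ <;> simp only [Set.mem_Icc] at hx hy <;> omega

lemma goodorder_flip (a b : ℤ) (r : ℤ → ℤ → Prop) (h : GoodOrder a b r) :
    GoodOrder a b (fun p q => r q p) := by
  obtain ⟨h1, h2, h3, h4⟩ := h
  exact ⟨fun p hp => h1 p hp, fun p hp q hq t ht hpq hqt => h2 t ht q hq p hp hqt hpq,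
    fun p hp q hq hne => (h3 p hp q hq hne).symm, fun c hc => ⟨(h4 c hc).2, (h4 c hc).1⟩⟩

lemma goodorder_main (a b : ℤ) (hab : a < b) (r : ℤ → ℤ → Prop) (hr : GoodOrder a b r)
    (hbase : r a (a + 1)) :
    ∀ p ∈ Set.Icc a b, ∀ q ∈ Set.Icc a b, (r p q ↔ p < q) := by
  obtain ⟨hirr, htrans, htot, hconn⟩ := hr
  -- direction is constant along adjacent pairs
  have step : ∀ c, a ≤ c → c + 1 ≤ b → r c (c + 1) := by
    intro c hc
    refine Int.le_induction (motive := fun c _ => c + 1 ≤ b → r c (c + 1)) ?_ ?_ c hc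
    · intro _; exact hbase
    · intro n hn IH hb
      have hnI : n ∈ Set.Icc a b := Set.mem_Icc.mpr ⟨hn, by omega⟩
      have hn1I : n + 1 ∈ Set.Icc a b := Set.mem_Icc.mpr ⟨by omega, by omega⟩
      have hn2I : n + 1 + 1 ∈ Set.Icc a b := Set.mem_Icc.mpr ⟨by omega, by omega⟩
      have hprev : r n (n + 1) := IH (by omega)
      by_contra hnot
      have hrev : r (n + 1 + 1) (n + 1) :=
        (htot (n + 1) hn1I (n + 1 + 1) hn2I (by omega)).resolve_left hnot
      have hcvx := convex_of_conn _ (hconn (n + 1) hn1I).1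
      have hmid : n + 1 ∈ {p ∈ Set.Icc a b | r p (n + 1)} :=
        hcvx n ⟨hnI, hprev⟩ (n + 1 + 1) ⟨hn2I, hrev⟩ (n + 1) (by omega) (by omega)
      exact hirr (n + 1) hn1I hmid.2
  -- p < q implies r p q
  have mono : ∀ p ∈ Set.Icc a b, ∀ q ∈ Set.Icc a b, p < q → r p q := by
    intro p hp q hq hpq
    simp only [Set.mem_Icc] at hp hq
    have : ∀ q', p + 1 ≤ q' → q' ≤ b → r p q' := by
      intro q' hq'
      refine Int.le_induction (motive := fun q' _ => q' ≤ b → r p q') ?_ ?_ q' hq'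
      · intro hb; exact step p hp.1 hb
      · intro n hn IH hb
        have h1 : r p n := IH (by omega)
        have h2 : r n (n + 1) := step n (by omega) hb
        exact htrans p (Set.mem_Icc.mpr ⟨hp.1, by omega⟩)
          n (Set.mem_Icc.mpr ⟨by omega, by omega⟩)
          (n + 1) (Set.mem_Icc.mpr ⟨by omega, by omega⟩) h1 h2
    exact this q (by omega) hq.2
  intro p hp q hq
  constructor
  · intro hrpq
    rcases lt_trichotomy p q with h | h | h
    · exact h
    · exact absurd hrpq (h ▸ hirr p hp)
    · exact absurd (htrans p hp q hq p hp hrpq (mono q hq p hp h)) (hirr p hp)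
  · exact mono p hp q hq

/-- for integers `a < b` there are exactly two strict linear orders on
`[a,b]_ℤ` with all rays digitally 2-connected, namely `<` and its reverse. -/
theorem stmt_8 (a b : ℤ) (hab : a < b) :
    GoodOrder a b (· < ·) ∧ GoodOrder a b (fun p q => q < p) ∧
    ∀ r : ℤ → ℤ → Prop, GoodOrder a b r →
      (∀ p ∈ Set.Icc a b, ∀ q ∈ Set.Icc a b, (r p q ↔ p < q)) ∨
      (∀ p ∈ Set.Icc a b, ∀ q ∈ Set.Icc a b, (r p q ↔ q < p)) := by
  refine ⟨goodorder_lt a b, goodorder_flip a b _ (goodorder_lt a b), ?_⟩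
  intro r hr
  have haI : a ∈ Set.Icc a b := Set.mem_Icc.mpr ⟨le_refl a, le_of_lt hab⟩
  have ha1I : (a + 1) ∈ Set.Icc a b := Set.mem_Icc.mpr ⟨by omega, by omega⟩
  rcases hr.2.2.1 a haI (a + 1) ha1I (by omega) with h | h
  · exact Or.inl (goodorder_main a b hab r hr h)
  · exact Or.inr fun p hp q hq =>
      goodorder_main a b hab _ (goodorder_flip a b r hr) h q hq p hp
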